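/- Let $\Sigma$ be an alphabet with $s \geq 2$ characters, $W$ a word of length $w$, and $0 \leq d < w$. Then $|CN(W,d)| \leq \sum_{i=0}^{d} \binom{w}{i}(s-1)^{d-i} \sum_{j=0}^{d-i} \binom{w-i-1}{j}\binom{w + d - 2i - 2j - 1}{d-i-j}$. -/

import Mathlib

namespace Levenshtein

structure Cost (α β δ : Type*) where
  delete : α → δ
  insert : β → δ
  substitute : α → β → δ

def defaultCost {α : Type*} [DecidableEq α] : Cost α α ℕ where
  delete _ := 1
  insert _ := 1
  substitute a b := if a = b then 0 else 1

def impl {α β δ : Type*} [AddZeroClass δ] [Min δ] (C : Cost α β δ)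
    (xs : List α) (y : β) (d : {r : List δ // 0 < r.length}) : {r : List δ // 0 < r.length} :=
  let ⟨ds, w⟩ := d
  xs.zip (ds.zip ds.tail) |>.foldr
    (init := ⟨[C.insert y + ds.getLast (List.ne_nil_of_length_pos w)], by simp⟩)
    (fun ⟨x, d₀, d₁⟩ ⟨r, w⟩ =>
      ⟨min (C.delete x + r[0]) (min (C.insert y + d₀) (C.substitute x y + d₁)) :: r, by simp⟩)

end Levenshtein

open Levenshtein in
def suffixLevenshtein {α β δ : Type*} [AddZeroClass δ] [Min δ] (C : Cost α β δ)
    (xs : List α) (ys : List β) : {r : List δ // 0 < r.length} :=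
  ys.foldr
    (impl C xs)
    (xs.foldr (init := ⟨[0], by simp⟩) (fun a ⟨r, w⟩ => ⟨(C.delete a + r[0]) :: r, by simp⟩))

open Levenshtein in
def levenshtein {α β δ : Type*} [AddZeroClass δ] [Min δ] (C : Cost α β δ)
    (xs : List α) (ys : List β) : δ :=
  let ⟨r, w⟩ := suffixLevenshtein C xs ys
  r[0]

namespace Levenshtein

theorem defaultCost_delete {α : Type*} [DecidableEq α] (a : α) :
    (defaultCost : Cost α α ℕ).delete a = 1 := rfl

theorem defaultCost_insert {α : Type*} [DecidableEq α] (a : α) :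
    (defaultCost : Cost α α ℕ).insert a = 1 := rfl

end Levenshtein

section LevPort

variable {α β δ : Type*} [AddZeroClass δ] [Min δ] {C : Levenshtein.Cost α β δ}

theorem impl_cons_val (x : α) (xs : List α) (y : β) (d : δ) (ds : List δ)
    (w : 0 < (d :: ds).length) (w' : 0 < ds.length) :
    (Levenshtein.impl C (x :: xs) y ⟨d :: ds, w⟩).1 =
      min (C.delete x + (Levenshtein.impl C xs y ⟨ds, w'⟩).1[0]'(Levenshtein.impl C xs y ⟨ds, w'⟩).2)
        (min (C.insert y + d) (C.substitute x y + ds[0])) :: (Levenshtein.impl C xs y ⟨ds, w'⟩).1 := by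
  match ds, w' with
  | _ :: _, _ => rfl

theorem suffixLevenshtein_cons₁ (x : α) (xs : List α) (ys : List β) :
    suffixLevenshtein C (x :: xs) ys =
      ⟨levenshtein C (x :: xs) ys :: (suffixLevenshtein C xs ys).1, by simp⟩ := by
  have key : ∀ (l : List δ) (a : δ) (t : List δ) (h : 0 < l.length), l = a :: t → l[0]'h = a := by
    intro l a t h e; subst e; rfl
  induction ys with
  | nil => rfl
  | cons y ys ih =>
    apply Subtype.ext
    have e : (suffixLevenshtein C (x :: xs) (y :: ys)).1 = _ :=
      (congrArg (fun S => (Levenshtein.impl C (x :: xs) y S).1) ih).trans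
        (impl_cons_val x xs y _ _ _ (suffixLevenshtein C xs ys).2)
    show (suffixLevenshtein C (x :: xs) (y :: ys)).1
      = levenshtein C (x :: xs) (y :: ys) :: (suffixLevenshtein C xs (y :: ys)).1
    have hh : levenshtein C (x :: xs) (y :: ys) = _ :=
      key _ _ _ (suffixLevenshtein C (x :: xs) (y :: ys)).2 e
    rw [e, hh]
    rfl

@[simp] theorem levenshtein_nil_nil : levenshtein C [] [] = 0 := rfl

theorem levenshtein_cons_nil (x : α) (xs : List α) :
    levenshtein C (x :: xs) [] = C.delete x + levenshtein C xs [] := rfl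

theorem levenshtein_nil_cons (y : β) (ys : List β) :
    levenshtein C [] (y :: ys) = C.insert y + levenshtein C [] ys := by
  have hl : (suffixLevenshtein C [] ys).1.length = 1 := by cases ys <;> rfl
  have key2 : ∀ (l : List δ) (h1 : l ≠ []) (h2 : 0 < l.length), l.length = 1 →
      l.getLast h1 = l[0]'h2 := by
    intro l h1 h2 h
    match l, h with
    | [a], _ => rfl
  exact congrArg (C.insert y + ·) (key2 _ _ _ hl)

theorem levenshtein_cons_cons (x : α) (xs : List α) (y : β) (ys : List β) :
    levenshtein C (x :: xs) (y :: ys) =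
      min (C.delete x + levenshtein C xs (y :: ys))
        (min (C.insert y + levenshtein C (x :: xs) ys)
          (C.substitute x y + levenshtein C xs ys)) := by
  have key : ∀ (l : List δ) (a : δ) (t : List δ) (h : 0 < l.length), l = a :: t → l[0]'h = a := by
    intro l a t h e; subst e; rfl
  have e2 : (Levenshtein.impl C (x :: xs) y (suffixLevenshtein C (x :: xs) ys)).1 =
      (Levenshtein.impl C (x :: xs) y
        ⟨levenshtein C (x :: xs) ys :: (suffixLevenshtein C xs ys).1, by simp⟩).1 := by
    rw [suffixLevenshtein_cons₁]
  have e3 := impl_cons_val (C := C) x xs y (levenshtein C (x :: xs) ys)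
    (suffixLevenshtein C xs ys).1 (by simp) (suffixLevenshtein C xs ys).2
  have := key _ _ _ (Levenshtein.impl C (x :: xs) y (suffixLevenshtein C (x :: xs) ys)).2 (e2.trans e3)
  exact this

end LevPort

set_option linter.unusedSectionVars false
set_option maxHeartbeats 1000000

open Levenshtein (defaultCost)

namespace CN

variable {α : Type*} [DecidableEq α]

abbrev lev (X Y : List α) : ℕ := levenshtein defaultCost X Y






theorem lev_nil_right (X : List α) : lev X [] = X.length := by
  induction X with
  | nil => simp [lev]
  | cons a X ih =>
    rw [lev, levenshtein_cons_nil]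
    simp only [Levenshtein.defaultCost_delete, List.length_cons]
    simp [lev] at ih; omega

theorem lev_nil_left (Y : List α) : lev ([] : List α) Y = Y.length := by
  induction Y with
  | nil => simp [lev]
  | cons b Y ih =>
    rw [lev, levenshtein_nil_cons]
    simp only [Levenshtein.defaultCost_insert, List.length_cons]
    simp [lev] at ih; omega

theorem lev_cc (a b : α) (X Y : List α) :
    lev (a :: X) (b :: Y) =
      min (1 + lev X (b :: Y)) (min (1 + lev (a :: X) Y)
        ((if a = b then 0 else 1) + lev X Y)) := by
  rw [lev, levenshtein_cons_cons]; rfl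

theorem lev_le_A (a b : α) (X Y : List α) : lev (a :: X) (b :: Y) ≤ 1 + lev X (b :: Y) := by
  rw [lev_cc]; exact min_le_left _ _

theorem lev_le_B (a b : α) (X Y : List α) : lev (a :: X) (b :: Y) ≤ 1 + lev (a :: X) Y := by
  rw [lev_cc]; exact le_trans (min_le_right _ _) (min_le_left _ _)

theorem lev_le_C (a b : α) (X Y : List α) :
    lev (a :: X) (b :: Y) ≤ (if a = b then 0 else 1) + lev X Y := by
  rw [lev_cc]; exact le_trans (min_le_right _ _) (min_le_right _ _)

theorem lev_cons_left_le (a : α) (X Y : List α) : lev (a :: X) Y ≤ 1 + lev X Y := by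
  cases Y with
  | nil => rw [lev_nil_right, lev_nil_right]; simp
  | cons b Y => exact lev_le_A a b X Y

theorem lev_cons_right_le (b : α) (X Y : List α) : lev X (b :: Y) ≤ 1 + lev X Y := by
  cases X with
  | nil => rw [lev_nil_left, lev_nil_left]; simp
  | cons a X => exact lev_le_B a b X Y

theorem lev_match_le (a : α) (X Y : List α) : lev (a :: X) (a :: Y) ≤ lev X Y := by
  have := lev_le_C a a X Y; simpa using this

theorem lev_sub_le (a b : α) (X Y : List α) : lev (a :: X) (b :: Y) ≤ 1 + lev X Y := by
  refine le_trans (lev_le_C a b X Y) ?_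
  split <;> omega

theorem lev_three_cases (a b : α) (X Y : List α) :
    lev (a :: X) (b :: Y) = 1 + lev X (b :: Y) ∨
    lev (a :: X) (b :: Y) = 1 + lev (a :: X) Y ∨
    lev (a :: X) (b :: Y) = (if a = b then 0 else 1) + lev X Y := by
  rw [lev_cc]
  rcases min_choice (1 + lev X (b :: Y)) (min (1 + lev (a :: X) Y) ((if a = b then 0 else 1) + lev X Y)) with h | h
  · left; exact h
  · rw [h]
    rcases min_choice (1 + lev (a :: X) Y) ((if a = b then 0 else 1) + lev X Y) with h' | h'
    · right; left; exact h'
    · right; right; exact h'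

theorem lev_le_cons_left (a : α) (X Y : List α) : lev X Y ≤ lev (a :: X) Y + 1 := by
  induction Y generalizing X with
  | nil => rw [lev_nil_right, lev_nil_right]; simp; omega
  | cons b Y ih =>
    rcases lev_three_cases a b X Y with h | h | h
    · rw [h]; omega
    · rw [h]
      have h1 : lev X (b :: Y) ≤ 1 + lev X Y := lev_cons_right_le b X Y
      have h2 := ih X
      omega
    · rw [h]
      have h1 := lev_cons_right_le b X Y
      by_cases hab : a = b
      · subst hab; simp only [if_pos rfl]; omega
      · simp only [if_neg hab]; omega

theorem lev_le_cons_right (b : α) (X Y : List α) : lev X Y ≤ lev X (b :: Y) + 1 := by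
  induction X generalizing Y with
  | nil => rw [lev_nil_left, lev_nil_left]; simp; omega
  | cons a X ih =>
    rcases lev_three_cases a b X Y with h | h | h
    · rw [h]
      have h1 : lev (a :: X) Y ≤ 1 + lev X Y := lev_cons_left_le a X Y
      have h2 := ih Y
      omega
    · rw [h]; omega
    · rw [h]
      have h1 := lev_cons_left_le a X Y
      by_cases hab : a = b
      · subst hab; simp only [if_pos rfl]; omega
      · simp only [if_neg hab]; omega

theorem lev_match_eq (a : α) (X Y : List α) : lev (a :: X) (a :: Y) = lev X Y := by
  refine le_antisymm (lev_match_le a X Y) ?_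
  rw [lev_cc]
  refine le_min ?_ (le_min ?_ ?_)
  · have := lev_le_cons_right a X Y; omega
  · have := lev_le_cons_left a X Y; omega
  · simp

theorem lev_append_left_le (A X Y : List α) : lev (A ++ X) Y ≤ A.length + lev X Y := by
  induction A with
  | nil => simp
  | cons a A ih =>
    have h := lev_cons_left_le a (A ++ X) Y
    simp only [List.cons_append] at *
    simp only [List.length_cons]
    omega

theorem length_le_lev_add (X Y : List α) : Y.length ≤ lev X Y + X.length := by
  induction X generalizing Y with
  | nil => rw [lev_nil_left]; omega
  | cons a X ih =>
    cases Y with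
    | nil => simp
    | cons b Y =>
      simp only [List.length_cons]
      rcases lev_three_cases a b X (Y) with h | h | h
      · rw [h]
        have := ih (b :: Y); simp only [List.length_cons] at this; omega
      · rw [h]
        have h1 : lev X Y ≤ lev (a :: X) Y + 1 := lev_le_cons_left a X Y
        have := ih Y
        omega
      · rw [h]
        by_cases hab : a = b <;> simp [hab] <;> (have := ih Y; omega)

theorem lev_concat_le_aux : ∀ (n : ℕ) (W U : List α), U.length + W.length ≤ n →
    ∀ c, lev U W ≤ lev (U ++ [c]) W + 1 := by
  intro n
  induction n with
  | zero =>
    intro W U h c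
    have hU : U = [] := by cases U <;> simp_all
    have hW : W = [] := by cases W <;> simp_all
    subst hU; subst hW
    simp [lev_nil_left, lev_nil_right]
  | succ n ih =>
    intro W U h c
    cases U with
    | nil =>
      rw [lev_nil_left]
      have := length_le_lev_add [c] W
      simpa using this
    | cons a U =>
      cases W with
      | nil => rw [lev_nil_right, lev_nil_right]; simp
      | cons b W =>
        have hUc : (a :: U) ++ [c] = a :: (U ++ [c]) := rfl
        rw [hUc]
        simp only [List.length_cons] at h
        rcases lev_three_cases a b (U ++ [c]) W with hh | hh | hh
        · rw [hh]
          have h1 := ih (b :: W) U (by simp; omega) c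
          have h2 := lev_cons_left_le a U (b :: W)
          omega
        · rw [hh]
          have h1 := ih W (a :: U) (by simp; omega) c
          have h2 := lev_cons_right_le b (a :: U) W
          rw [hUc] at h1
          omega
        · rw [hh]
          have h1 := ih W U (by omega) c
          by_cases hab : a = b
          · subst hab
            have h3 := lev_match_le a U W
            simp only [if_pos rfl]
            have h4 := lev_match_eq a U W
            omega
          · have h2 := lev_sub_le a b U W
            simp only [if_neg hab]
            omega

theorem lev_dropLast_le (W U : List α) (h : U ≠ []) :
    lev U.dropLast W ≤ lev U W + 1 := by
  obtain ⟨V, c, rfl⟩ := (List.eq_nil_or_concat U).resolve_left h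
  rw [List.concat_eq_append, List.dropLast_concat]
  exact lev_concat_le_aux (V.length + 1 + W.length) W V (by simp) c





/-- Edit tags: one per character of `W`. -/
inductive Tg (α : Type*) where
  | del : Tg α
  | sub : α → Tg α
  | keep : List α → Tg α
deriving DecidableEq

/-- Apply a tag list to `W`. -/
def applyT : List α → List (Tg α) → List α
  | _, [] => []
  | [], _ => []
  | _ :: W, .del :: T => applyT W T
  | _ :: W, .sub c :: T => c :: applyT W T
  | x :: W, .keep blk :: T => blk ++ x :: applyT W T

def costT : List (Tg α) → ℕ
  | [] => 0
  | .del :: T => 1 + costT T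
  | .sub _ :: T => 1 + costT T
  | .keep blk :: T => blk.length + costT T

/-- Well-formedness w.r.t. `W` -/
inductive Ok : List α → List (Tg α) → Prop where
  | nil : Ok [] []
  | del {x W T} : Ok W T → Ok (x :: W) (.del :: T)
  | sub {x c W T} : c ≠ x → Ok W T → Ok (x :: W) (.sub c :: T)
  | keep {x blk W T} : (∀ c ∈ blk, c ≠ x) → Ok W T → Ok (x :: W) (.keep blk :: T)

def allDel (T : List (Tg α)) : Prop := ∀ t ∈ T, t = Tg.del

instance (T : List (Tg α)) : Decidable (allDel T) := by unfold allDel; infer_instance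

/-- the last non-del tag (if any) is a keep -/
def EndOk : List (Tg α) → Prop
  | [] => True
  | .del :: T => EndOk T
  | .sub _ :: T => EndOk T ∧ ¬ allDel T
  | .keep _ :: T => EndOk T

theorem applyT_allDel (W : List α) (T : List (Tg α)) (h : allDel T) : applyT W T = [] := by
  induction T generalizing W with
  | nil => cases W <;> rfl
  | cons t T ih =>
    have ht : t = Tg.del := h t (by simp)
    subst ht
    cases W with
    | nil => rfl
    | cons x W => exact ih W (fun t ht => h t (by simp [ht]))

theorem not_allDel_of_applyT_ne (W : List α) (T : List (Tg α)) (h : applyT W T ≠ []) :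
    ¬ allDel T := fun hd => h (applyT_allDel W T hd)

theorem costT_allDelList (W : List α) : costT (W.map (fun _ => (Tg.del : Tg α))) = W.length := by
  induction W with
  | nil => rfl
  | cons x W ih => simp only [List.map_cons, costT, List.length_cons, ih]; omega

theorem ok_allDelList (W : List α) : Ok W (W.map (fun _ => (Tg.del : Tg α))) := by
  induction W with
  | nil => exact Ok.nil
  | cons x W ih => exact Ok.del ih

theorem endOk_allDelList (W : List α) : EndOk (W.map (fun _ => (Tg.del : Tg α))) := by
  induction W with
  | nil => trivial
  | cons x W ih => exact ih

theorem allDel_allDelList (W : List α) : allDel (W.map (fun _ => (Tg.del : Tg α))) := by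
  intro t ht; rcases List.mem_map.mp ht with ⟨_, _, rfl⟩; rfl

theorem applyT_allDelList (W : List α) : applyT W (W.map (fun _ => (Tg.del : Tg α))) = [] :=
  applyT_allDel _ _ (allDel_allDelList W)







section Helpers

theorem prefix_cons_cons {a : α} {P U : List α} (h : P <+: U) : a :: P <+: a :: U := by
  obtain ⟨t, rfl⟩ := h; exact ⟨t, rfl⟩

theorem prefix_append_left' (A : List α) {P U : List α} (h : P <+: U) : A ++ P <+: A ++ U := by
  obtain ⟨t, rfl⟩ := h; exact ⟨t, by simp⟩

theorem mem_split_first {x : α} : ∀ {cs : List α}, x ∈ cs →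
    ∃ A B, cs = A ++ x :: B ∧ ∀ a ∈ A, a ≠ x := by
  intro cs
  induction cs with
  | nil => intro h; simp at h
  | cons c cs ih =>
    intro h
    by_cases hc : c = x
    · exact ⟨[], cs, by simp [hc], by simp⟩
    · have hx : x ∈ cs := by
        rcases List.mem_cons.mp h with h' | h'
        · exact absurd h'.symm hc
        · exact h'
      obtain ⟨A, B, rfl, hA⟩ := ih hx
      exact ⟨c :: A, B, by simp, by
        intro a ha
        rcases List.mem_cons.mp ha with rfl | ha'
        · exact hc
        · exact hA a ha'⟩

end Helpers



theorem sound {W : List α} {T : List (Tg α)} (h : Ok W T) :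
    lev (applyT W T) W ≤ costT T := by
  induction h with
  | nil => simp [applyT, costT, lev]
  | @del x W T _ ih =>
    show lev (applyT W T) (x :: W) ≤ costT (Tg.del :: T)
    have := lev_cons_right_le x (applyT W T) W
    simp only [costT]
    omega
  | @sub x c W T hc _ ih =>
    show lev (c :: applyT W T) (x :: W) ≤ costT (Tg.sub c :: T)
    have := lev_sub_le c x (applyT W T) W
    simp only [costT]
    omega
  | @keep x blk W T hblk _ ih =>
    show lev (blk ++ x :: applyT W T) (x :: W) ≤ costT (Tg.keep blk :: T)
    have h1 := lev_append_left_le blk (x :: applyT W T) (x :: W)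
    have h2 := lev_match_eq x (applyT W T) W
    simp only [costT]
    omega

theorem push {W : List α} {T : List (Tg α)} (hOk : Ok W T) :
    EndOk T → ∀ cs : List α,
    (∃ T', Ok W T' ∧ EndOk T' ∧ applyT W T' = cs ++ applyT W T ∧
        costT T' ≤ costT T + cs.length) ∨
    (∃ P, P <+: cs ++ applyT W T ∧ P ≠ cs ++ applyT W T ∧
        lev P W + 1 ≤ costT T + cs.length) := by
  induction hOk with
  | nil =>
    intro _ cs
    cases cs with
    | nil => exact Or.inl ⟨[], Ok.nil, trivial, rfl, le_refl _⟩
    | cons c cs' =>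
      refine Or.inr ⟨(c :: cs').dropLast, ?_, ?_, ?_⟩
      · simpa [applyT] using List.dropLast_prefix (c :: cs')
      · intro hEq
        have := congrArg List.length hEq
        simp [applyT] at this
      · rw [lev_nil_right]
        simp [applyT, costT]
  | @del x W T hT ih =>
    intro hE cs
    rcases ih hE cs with ⟨T', hOk', hE', happ, hcost⟩ | ⟨P, hp, hne, hl⟩
    · refine Or.inl ⟨Tg.del :: T', Ok.del hOk', hE', ?_, ?_⟩
      · simpa [applyT] using happ
      · simp only [costT]; omega
    · refine Or.inr ⟨P, ?_, ?_, ?_⟩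
      · simpa [applyT] using hp
      · simpa [applyT] using hne
      · have := lev_cons_right_le x P W
        simp only [costT]
        omega
  | @sub x c W T hc hT ih =>
    intro hE cs
    obtain ⟨hET, hnd⟩ := hE
    cases cs with
    | nil => exact Or.inl ⟨Tg.sub c :: T, Ok.sub hc hT, ⟨hET, hnd⟩, by simp, by simp⟩
    | cons c₁ cs₀ =>
      rcases ih hET (cs₀ ++ [c]) with ⟨T', hOk', hE', happ, hcost⟩ | ⟨P, hp, hne, hl⟩
      · by_cases h1 : c₁ = x
        · subst h1
          refine Or.inl ⟨Tg.keep [] :: T', Ok.keep (by simp) hOk', hE', ?_, ?_⟩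
          · show [] ++ c₁ :: applyT W T' = (c₁ :: cs₀) ++ applyT (c₁ :: W) (Tg.sub c :: T)
            simp [applyT, happ]
          · simp only [costT] at *
            simp at hcost ⊢
            omega
        · refine Or.inl ⟨Tg.sub c₁ :: T', Ok.sub h1 hOk', ⟨hE', ?_⟩, ?_, ?_⟩
          · apply not_allDel_of_applyT_ne
            rw [happ]
            simp
          · show c₁ :: applyT W T' = (c₁ :: cs₀) ++ applyT (x :: W) (Tg.sub c :: T)
            simp [applyT, happ]
          · simp only [costT] at *
            simp at hcost ⊢
            omega
      · have hstr : (cs₀ ++ [c]) ++ applyT W T = cs₀ ++ applyT (x :: W) (Tg.sub c :: T) := by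
          simp [applyT]
        by_cases h1 : c₁ = x
        · subst h1
          refine Or.inr ⟨c₁ :: P, ?_, ?_, ?_⟩
          · show c₁ :: P <+: (c₁ :: cs₀) ++ applyT (c₁ :: W) (Tg.sub c :: T)
            rw [List.cons_append, ← hstr]
            exact prefix_cons_cons hp
          · intro hEq
            rw [List.cons_append, ← hstr] at hEq
            exact hne (by injection hEq)
          · have := lev_match_le c₁ P W
            simp only [costT] at *
            simp only [List.length_append, List.length_cons, List.length_nil] at hl ⊢
            omega
        · refine Or.inr ⟨c₁ :: P, ?_, ?_, ?_⟩
          · show c₁ :: P <+: (c₁ :: cs₀) ++ applyT (x :: W) (Tg.sub c :: T)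
            rw [List.cons_append, ← hstr]
            exact prefix_cons_cons hp
          · intro hEq
            rw [List.cons_append, ← hstr] at hEq
            exact hne (by injection hEq)
          · have := lev_sub_le c₁ x P W
            simp only [costT] at *
            simp only [List.length_append, List.length_cons, List.length_nil] at hl ⊢
            omega
  | @keep x blk W T hblk hT ih =>
    intro hE cs
    by_cases hx : x ∈ cs
    · obtain ⟨A, B, rfl, hA⟩ := mem_split_first hx
      rcases ih hE (B ++ blk ++ [x]) with ⟨T', hOk', hE', happ, hcost⟩ | ⟨P, hp, hne, hl⟩
      · refine Or.inl ⟨Tg.keep A :: T', Ok.keep hA hOk', hE', ?_, ?_⟩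
        · show A ++ x :: applyT W T' = (A ++ x :: B) ++ applyT (x :: W) (Tg.keep blk :: T)
          rw [happ]
          simp [applyT]
        · simp only [costT] at *
          simp at hcost ⊢
          omega
      · have hstr : (B ++ blk ++ [x]) ++ applyT W T
            = B ++ (blk ++ x :: applyT W T) := by simp
        refine Or.inr ⟨A ++ x :: P, ?_, ?_, ?_⟩
        · show A ++ x :: P <+: (A ++ x :: B) ++ applyT (x :: W) (Tg.keep blk :: T)
          have : (A ++ x :: B) ++ applyT (x :: W) (Tg.keep blk :: T)
              = A ++ x :: (B ++ (blk ++ x :: applyT W T)) := by simp [applyT]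
          rw [this]
          refine prefix_append_left' A (prefix_cons_cons ?_)
          rw [← hstr]
          exact hp
        · intro hEq
          have : (A ++ x :: B) ++ applyT (x :: W) (Tg.keep blk :: T)
              = A ++ x :: (B ++ (blk ++ x :: applyT W T)) := by simp [applyT]
          rw [this] at hEq
          have h2 := List.append_cancel_left hEq
          have h3 : P = B ++ (blk ++ x :: applyT W T) := by injection h2
          apply hne
          rw [hstr, h3]
        · have h1 := lev_append_left_le A (x :: P) (x :: W)
          have h2 := lev_match_le x P W
          simp only [costT] at *
          simp at hl ⊢
          omega
    · refine Or.inl ⟨Tg.keep (cs ++ blk) :: T, Ok.keep ?_ hT, hE, ?_, ?_⟩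
      · intro a ha
        rcases List.mem_append.mp ha with h' | h'
        · intro rfl'; exact hx (by rw [← rfl'] at *; exact h')
        · exact hblk a h'
      · show (cs ++ blk) ++ x :: applyT W T = cs ++ applyT (x :: W) (Tg.keep blk :: T)
        simp [applyT]
      · simp only [costT]
        simp
        omega

theorem main : ∀ (n : ℕ) (W U : List α), U.length + W.length ≤ n →
    (∃ P, P <+: U ∧ P ≠ U ∧ lev P W ≤ lev U W) ∨
    (∃ T, Ok W T ∧ EndOk T ∧ applyT W T = U ∧ costT T = lev U W) := by
  intro n
  induction n with
  | zero =>
    intro W U h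
    have hU : U = [] := by cases U <;> simp_all
    have hW : W = [] := by cases W <;> simp_all
    subst hU; subst hW
    exact Or.inr ⟨[], Ok.nil, trivial, rfl, by simp [applyT, costT, lev]⟩
  | succ n ih =>
    intro W U h
    cases U with
    | nil =>
      refine Or.inr ⟨W.map (fun _ => Tg.del), ok_allDelList W, endOk_allDelList W,
        applyT_allDelList W, ?_⟩
      rw [costT_allDelList, lev_nil_left]
    | cons a U' =>
      cases W with
      | nil =>
        refine Or.inl ⟨[], List.nil_prefix, by simp, ?_⟩
        simp [lev_nil_right, lev]
      | cons b W' =>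
        simp only [List.length_cons] at h
        by_cases hab : a = b
        · subst hab
          have hM := lev_match_eq a U' W'
          rcases ih W' U' (by omega) with ⟨P, hp, hne, hl⟩ | ⟨T', hOk, hE, happ, hcost⟩
          · refine Or.inl ⟨a :: P, prefix_cons_cons hp, ?_, ?_⟩
            · intro hEq; exact hne (by injection hEq)
            · have := lev_match_le a P W'
              omega
          · refine Or.inr ⟨Tg.keep [] :: T', Ok.keep (by simp) hOk, hE, ?_, ?_⟩
            · show [] ++ a :: applyT W' T' = a :: U'
              rw [happ]; rfl
            · show [].length + costT T' = lev (a :: U') (a :: W')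
              rw [hM]; simpa using hcost
        · rcases lev_three_cases a b U' W' with hh | hh | hh
          · -- branch A : head of U is an insertion
            rcases ih (b :: W') U' (by simp; omega) with ⟨P, hp, hne, hl⟩ | ⟨T', hOk, hE, happ, hcost⟩
            · refine Or.inl ⟨a :: P, prefix_cons_cons hp, ?_, ?_⟩
              · intro hEq; exact hne (by injection hEq)
              · have := lev_cons_left_le a P (b :: W')
                omega
            · rcases push hOk hE [a] with ⟨T₂, hOk₂, hE₂, happ₂, hcost₂⟩ | ⟨P, hp, hne, hl⟩
              · have happ₃ : applyT (b :: W') T₂ = a :: U' := by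
                  rw [happ₂, happ]; rfl
                refine Or.inr ⟨T₂, hOk₂, hE₂, happ₃, ?_⟩
                have hs := sound hOk₂
                rw [happ₃] at hs
                simp only [List.length_cons, List.length_nil] at hcost₂
                omega
              · rw [happ] at hp hne
                simp only [List.cons_append, List.nil_append] at hp hne
                refine Or.inl ⟨P, hp, hne, ?_⟩
                simp only [List.length_cons, List.length_nil] at hl
                omega
          · -- branch B : head of W is deleted
            rcases ih W' (a :: U') (by simp; omega) with ⟨P, hp, hne, hl⟩ | ⟨T', hOk, hE, happ, hcost⟩
            · refine Or.inl ⟨P, hp, hne, ?_⟩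
              have := lev_cons_right_le b P W'
              omega
            · refine Or.inr ⟨Tg.del :: T', Ok.del hOk, hE, ?_, ?_⟩
              · show applyT W' T' = a :: U'
                exact happ
              · show 1 + costT T' = lev (a :: U') (b :: W')
                omega
          · -- branch C : substitution
            rw [if_neg hab] at hh
            rcases ih W' U' (by omega) with ⟨P, hp, hne, hl⟩ | ⟨T', hOk, hE, happ, hcost⟩
            · refine Or.inl ⟨a :: P, prefix_cons_cons hp, ?_, ?_⟩
              · intro hEq; exact hne (by injection hEq)
              · have := lev_sub_le a b P W'
                omega
            · by_cases hU' : U' = []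
              · subst hU'
                refine Or.inl ⟨[], List.nil_prefix, by simp, ?_⟩
                rw [lev_nil_left]
                rw [lev_nil_left] at hh
                simp only [List.length_cons]
                omega
              · refine Or.inr ⟨Tg.sub a :: T', Ok.sub hab hOk, ⟨hE, ?_⟩, ?_, ?_⟩
                · apply not_allDel_of_applyT_ne
                  rw [happ]; exact hU'
                · show a :: applyT W' T' = a :: U'
                  rw [happ]
                · show 1 + costT T' = lev (a :: U') (b :: W')
                  omega


end CN

namespace CNA

def inG (n d i : ℕ) : ℕ :=
  ∑ j ∈ Finset.range (d - i + 1),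
    (n - i - 1).choose j * (n + d - 2*i - 2*j - 1).choose (d - i - j)

def inA (n d i : ℕ) : ℕ :=
  ∑ j ∈ Finset.range (d - i + 1),
    (n - i).choose j * (n + d - 2*i - 2*j).choose (d - i - j)

def inB (n d i : ℕ) : ℕ :=
  ∑ j ∈ Finset.range (d - i + 1),
    (n - i - 1).choose j * (n + d - 2*i - 2*j).choose (d - i - j)

def g (t n d : ℕ) : ℕ := ∑ i ∈ Finset.range (d + 1), n.choose i * t ^ (d - i) * inG n d i

def aS (t n d : ℕ) : ℕ := ∑ i ∈ Finset.range (d + 1), n.choose i * t ^ (d - i) * inA n d i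

def bS (t n d : ℕ) : ℕ := ∑ i ∈ Finset.range (d + 1), n.choose i * t ^ (d - i) * inB n d i

theorem pascal {M k : ℕ} (hM : 1 ≤ M) (hk : 1 ≤ k) :
    M.choose k = (M-1).choose (k-1) + (M-1).choose k := by
  cases M with
  | zero => omega
  | succ M' =>
    cases k with
    | zero => omega
    | succ k' => simp [Nat.choose_succ_succ]

theorem inG_self (n d : ℕ) : inG n d d = 1 := by
  simp [inG, Nat.sub_self]

theorem inA_self (n d : ℕ) : inA n d d = 1 := by
  simp [inA, Nat.sub_self]

theorem inB_self (n d : ℕ) : inB n d d = 1 := by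
  simp [inB, Nat.sub_self]

theorem g_zero (t n : ℕ) : g t n 0 = 1 := by
  simp [g, inG]

theorem inA_at_n (n d : ℕ) : inA n d n = 1 := by
  rw [inA]
  rw [Finset.sum_eq_single 0]
  · have h1 : n - n = 0 := by omega
    have h2 : n + d - 2*n - 2*0 = d - n := by omega
    have h3 : d - n - 0 = d - n := by omega
    rw [h1, h2, h3]
    simp
  · intro j _ hj
    have : n - n = 0 := by omega
    rw [this, Nat.choose_eq_zero_of_lt (by omega : 0 < j)]
    ring
  · intro h
    simp at h

theorem inB_at_n (n d : ℕ) : inB n d n = 1 := by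
  rw [inB]
  rw [Finset.sum_eq_single 0]
  · have h1 : n - n - 1 = 0 := by omega
    have h2 : n + d - 2*n - 2*0 = d - n := by omega
    have h3 : d - n - 0 = d - n := by omega
    rw [h1, h2, h3]
    simp
  · intro j _ hj
    have : n - n - 1 = 0 := by omega
    rw [this, Nat.choose_eq_zero_of_lt (by omega : 0 < j)]
    ring
  · intro h
    simp at h

theorem inG_at_n (n e : ℕ) (h : n ≤ e) : inG n e n = if e = n then 1 else 0 := by
  rw [inG]
  rw [Finset.sum_eq_single 0]
  · have h1 : n - n - 1 = 0 := by omega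
    rw [h1]
    by_cases he : e = n
    · have h2 : n + e - 2*n - 2*0 - 1 = 0 := by omega
      have h3 : e - n - 0 = 0 := by omega
      rw [h2, h3]
      simp [he]
    · have h2 : n + e - 2*n - 2*0 - 1 = e - n - 1 := by omega
      have h3 : e - n - 0 = e - n := by omega
      rw [h2, h3]
      rw [Nat.choose_eq_zero_of_lt (by omega : e - n - 1 < e - n)]
      simp [he]
  · intro j _ hj
    have : n - n - 1 = 0 := by omega
    rw [this, Nat.choose_eq_zero_of_lt (by omega : 0 < j)]
    ring
  · intro h
    simp at h

/-- shift lemma (explicit form of `Finset.sum_range_succ'`) -/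
theorem sum_shift (f : ℕ → ℕ) (m : ℕ) :
    ∑ i ∈ Finset.range (m+1), f i = (∑ i ∈ Finset.range m, f (i+1)) + f 0 :=
  Finset.sum_range_succ' f m

/-- (I1) -/
theorem I1 (t n e : ℕ) : g t (n+1) (e+1) = g t n e + aS t n (e+1) := by
  have hstep : g t (n+1) (e+1)
      = ∑ i ∈ Finset.range (e+1+1), (fun i => (n+1).choose i * (t ^ ((e+1) - i) * inA n (e+1) i)) i := by
    rw [g]
    apply Finset.sum_congr rfl
    intro i _
    show (n+1).choose i * t ^ (e + 1 - i) * inG (n+1) (e+1) i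
        = (n+1).choose i * (t ^ (e + 1 - i) * inA n (e+1) i)
    have hin : inG (n+1) (e+1) i = inA n (e+1) i := by
      rw [inG, inA]
      apply Finset.sum_congr rfl
      intro j _
      have h1 : n + 1 - i - 1 = n - i := by omega
      have h2 : n + 1 + (e+1) - 2*i - 2*j - 1 = n + (e+1) - 2*i - 2*j := by omega
      rw [h1, h2]
    rw [hin, mul_assoc]
  rw [hstep, sum_shift]
  have haS : aS t n (e+1)
      = (∑ i ∈ Finset.range (e+1), n.choose (i+1) * (t ^ ((e+1) - (i+1)) * inA n (e+1) (i+1)))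
        + n.choose 0 * (t ^ ((e+1) - 0) * inA n (e+1) 0) := by
    rw [aS]
    have h0 : ∑ i ∈ Finset.range (e+1+1), n.choose i * t ^ ((e+1) - i) * inA n (e+1) i
        = ∑ i ∈ Finset.range (e+1+1), (fun i => n.choose i * (t ^ ((e+1) - i) * inA n (e+1) i)) i := by
      apply Finset.sum_congr rfl
      intro i _
      rw [mul_assoc]
    rw [h0, sum_shift]
  have hg : (∑ i ∈ Finset.range (e+1), n.choose i * (t ^ ((e+1) - (i+1)) * inA n (e+1) (i+1)))
      = g t n e := by
    rw [g]
    apply Finset.sum_congr rfl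
    intro i _
    have hp : (e+1) - (i+1) = e - i := by omega
    have hin : inA n (e+1) (i+1) = inG n e i := by
      rw [inA, inG]
      have hr : (e+1) - (i+1) + 1 = e - i + 1 := by omega
      rw [hr]
      apply Finset.sum_congr rfl
      intro j _
      have h1 : n - (i+1) = n - i - 1 := by omega
      have h2 : n + (e+1) - 2*(i+1) - 2*j = n + e - 2*i - 2*j - 1 := by omega
      have h3 : (e+1) - (i+1) - j = e - i - j := by omega
      rw [h1, h2, h3]
    rw [hp, hin, mul_assoc]
  have hsplit : ∀ i ∈ Finset.range (e+1),
      (fun i => (n+1).choose i * (t ^ ((e+1) - i) * inA n (e+1) i)) (i+1)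
        = n.choose i * (t ^ ((e+1) - (i+1)) * inA n (e+1) (i+1))
          + n.choose (i+1) * (t ^ ((e+1) - (i+1)) * inA n (e+1) (i+1)) := by
    intro i _
    show (n+1).choose (i+1) * (t ^ ((e+1) - (i+1)) * inA n (e+1) (i+1)) = _
    rw [Nat.choose_succ_succ, add_mul]
  rw [Finset.sum_congr rfl hsplit, Finset.sum_add_distrib]
  rw [haS, hg]
  show g t n e + _ + (n+1).choose 0 * (t ^ ((e+1) - 0) * inA n (e+1) 0) = _
  have : (n+1).choose 0 = n.choose 0 := by simp
  rw [this]
  omega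

theorem bS_zero (t n : ℕ) : bS t n 0 = 1 := by
  simp [bS, inB]

/-- key step for (I3): per-`i` inner identity -/
theorem claimB (n e i : ℕ) (hie : i ≤ e) (hin : i ≤ n) :
    inB n (e+1) i = inG n (e+1) i + inB n e i := by
  have hr : (e+1) - i + 1 = (e - i + 1) + 1 := by omega
  have hB : inB n (e+1) i
      = (∑ j ∈ Finset.range (e - i + 1),
          (n - i - 1).choose j * (n + (e+1) - 2*i - 2*j).choose ((e+1) - i - j))
        + (n - i - 1).choose (e - i + 1) *
            (n + (e+1) - 2*i - 2*(e - i + 1)).choose ((e+1) - i - (e - i + 1)) := by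
    rw [inB, hr]
    exact Finset.sum_range_succ _ _
  have hG : inG n (e+1) i
      = (∑ j ∈ Finset.range (e - i + 1),
          (n - i - 1).choose j * (n + (e+1) - 2*i - 2*j - 1).choose ((e+1) - i - j))
        + (n - i - 1).choose (e - i + 1) *
            (n + (e+1) - 2*i - 2*(e - i + 1) - 1).choose ((e+1) - i - (e - i + 1)) := by
    rw [inG, hr]
    exact Finset.sum_range_succ _ _
  have hz : (e+1) - i - (e - i + 1) = 0 := by omega
  rw [hz, Nat.choose_zero_right, mul_one] at hB hG
  have hmain : ∑ j ∈ Finset.range (e - i + 1),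
      (n - i - 1).choose j * (n + (e+1) - 2*i - 2*j).choose ((e+1) - i - j)
      = (∑ j ∈ Finset.range (e - i + 1),
          (n - i - 1).choose j * (n + (e+1) - 2*i - 2*j - 1).choose ((e+1) - i - j))
        + ∑ j ∈ Finset.range (e - i + 1),
            (n - i - 1).choose j * (n + e - 2*i - 2*j).choose (e - i - j) := by
    rw [← Finset.sum_add_distrib]
    apply Finset.sum_congr rfl
    intro j hj
    simp only [Finset.mem_range] at hj
    by_cases hjn : j ≤ n - i - 1
    · have hM : 1 ≤ n + (e+1) - 2*i - 2*j := by omega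
      have hk : 1 ≤ (e+1) - i - j := by omega
      rw [pascal hM hk]
      have h1 : n + (e+1) - 2*i - 2*j - 1 = n + e - 2*i - 2*j := by omega
      have h2 : (e+1) - i - j - 1 = e - i - j := by omega
      rw [h1, h2]
      ring
    · rw [Nat.choose_eq_zero_of_lt (by omega : n - i - 1 < j)]
      ring
  have hBe : inB n e i = ∑ j ∈ Finset.range (e - i + 1),
      (n - i - 1).choose j * (n + e - 2*i - 2*j).choose (e - i - j) := by rw [inB]
  omega

/-- (I3) recurrence -/
theorem I3key (t n e : ℕ) : bS t n (e+1) = g t n (e+1) + t * bS t n e := by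
  have hbS : bS t n (e+1)
      = (∑ i ∈ Finset.range (e+1), n.choose i * t ^ ((e+1) - i) * inB n (e+1) i)
        + n.choose (e+1) * t ^ ((e+1) - (e+1)) * inB n (e+1) (e+1) := by
    rw [bS]
    exact Finset.sum_range_succ _ _
  have hgS : g t n (e+1)
      = (∑ i ∈ Finset.range (e+1), n.choose i * t ^ ((e+1) - i) * inG n (e+1) i)
        + n.choose (e+1) * t ^ ((e+1) - (e+1)) * inG n (e+1) (e+1) := by
    rw [g]
    exact Finset.sum_range_succ _ _
  rw [inB_self] at hbS
  rw [inG_self] at hgS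
  have htb : t * bS t n e = ∑ i ∈ Finset.range (e+1),
      t * (n.choose i * t ^ (e - i) * inB n e i) := by
    rw [bS, Finset.mul_sum]
  have hmain : ∑ i ∈ Finset.range (e+1), n.choose i * t ^ ((e+1) - i) * inB n (e+1) i
      = (∑ i ∈ Finset.range (e+1), n.choose i * t ^ ((e+1) - i) * inG n (e+1) i)
        + ∑ i ∈ Finset.range (e+1), t * (n.choose i * t ^ (e - i) * inB n e i) := by
    rw [← Finset.sum_add_distrib]
    apply Finset.sum_congr rfl
    intro i hi
    simp only [Finset.mem_range] at hi
    by_cases hin : i ≤ n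
    · rw [claimB n e i (by omega) hin]
      have hp : (e+1) - i = (e - i) + 1 := by omega
      rw [hp, pow_succ]
      ring
    · rw [Nat.choose_eq_zero_of_lt (by omega : n < i)]
      ring
  omega

theorem I3 (t n d : ℕ) : bS t n d = ∑ l ∈ Finset.range (d+1), t^l * g t n (d-l) := by
  induction d with
  | zero => simp [bS_zero, g_zero]
  | succ e ih =>
    rw [I3key, ih]
    rw [sum_shift (fun l => t^l * g t n ((e+1)-l)) (e+1)]
    have h1 : ∑ l ∈ Finset.range (e+1), t^(l+1) * g t n ((e+1)-(l+1))
        = t * ∑ l ∈ Finset.range (e+1), t^l * g t n (e-l) := by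
      rw [Finset.mul_sum]
      apply Finset.sum_congr rfl
      intro l _
      have h2 : (e+1) - (l+1) = e - l := by omega
      rw [h2, pow_succ]
      ring
    rw [h1]
    have h3 : (e+1) - 0 = e + 1 := by omega
    rw [h3, pow_zero, one_mul]
    ring

/-- key step for (I2) : per-`i` inner identity, `i < n` -/
theorem claimA (n e i : ℕ) (hie : i ≤ e) (hin : i < n) :
    inA n (e+1) i = inB n (e+1) i + inG n e i := by
  have hr : (e+1) - i + 1 = (e - i + 1) + 1 := by omega
  have hA : inA n (e+1) i
      = (∑ j ∈ Finset.range (e - i + 1),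
          (n - i).choose (j+1) * (n + (e+1) - 2*i - 2*(j+1)).choose ((e+1) - i - (j+1)))
        + (n - i).choose 0 * (n + (e+1) - 2*i - 2*0).choose ((e+1) - i - 0) := by
    rw [inA, hr]
    exact Finset.sum_range_succ' _ _
  have hB : inB n (e+1) i
      = (∑ j ∈ Finset.range (e - i + 1),
          (n - i - 1).choose (j+1) * (n + (e+1) - 2*i - 2*(j+1)).choose ((e+1) - i - (j+1)))
        + (n - i - 1).choose 0 * (n + (e+1) - 2*i - 2*0).choose ((e+1) - i - 0) := by
    rw [inB, hr]
    exact Finset.sum_range_succ' _ _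
  have hmain : ∑ j ∈ Finset.range (e - i + 1),
      (n - i).choose (j+1) * (n + (e+1) - 2*i - 2*(j+1)).choose ((e+1) - i - (j+1))
      = (∑ j ∈ Finset.range (e - i + 1),
          (n - i - 1).choose (j+1) * (n + (e+1) - 2*i - 2*(j+1)).choose ((e+1) - i - (j+1)))
        + ∑ j ∈ Finset.range (e - i + 1),
            (n - i - 1).choose j * (n + e - 2*i - 2*j - 1).choose (e - i - j) := by
    rw [← Finset.sum_add_distrib]
    apply Finset.sum_congr rfl
    intro j hj
    simp only [Finset.mem_range] at hj
    have hp := pascal (by omega : 1 ≤ n - i) (by omega : 1 ≤ j + 1)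
    have h2 : j + 1 - 1 = j := by omega
    rw [h2] at hp
    rw [hp, add_mul]
    have h3 : n + (e+1) - 2*i - 2*(j+1) = n + e - 2*i - 2*j - 1 := by omega
    have h4 : (e+1) - i - (j+1) = e - i - j := by omega
    rw [h3, h4]
    ring
  have hGe : inG n e i = ∑ j ∈ Finset.range (e - i + 1),
      (n - i - 1).choose j * (n + e - 2*i - 2*j - 1).choose (e - i - j) := by rw [inG]
  rw [Nat.choose_zero_right, one_mul] at hA hB
  omega

/-- (I2) -/
theorem I2 (t n e : ℕ) :
    aS t n (e+1) + (if e = n then t else 0) = bS t n (e+1) + t * g t n e := by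
  have haS : aS t n (e+1)
      = (∑ i ∈ Finset.range (e+1), n.choose i * t ^ ((e+1) - i) * inA n (e+1) i)
        + n.choose (e+1) * t ^ ((e+1) - (e+1)) * inA n (e+1) (e+1) := by
    rw [aS]
    exact Finset.sum_range_succ _ _
  have hbS : bS t n (e+1)
      = (∑ i ∈ Finset.range (e+1), n.choose i * t ^ ((e+1) - i) * inB n (e+1) i)
        + n.choose (e+1) * t ^ ((e+1) - (e+1)) * inB n (e+1) (e+1) := by
    rw [bS]
    exact Finset.sum_range_succ _ _
  rw [inA_self] at haS
  rw [inB_self] at hbS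
  have htg : t * g t n e = ∑ i ∈ Finset.range (e+1),
      t * (n.choose i * t ^ (e - i) * inG n e i) := by
    rw [g, Finset.mul_sum]
  have hchi : (if e = n then t else 0)
      = ∑ i ∈ Finset.range (e+1), (if i = n then (if e = n then t else 0) else 0) := by
    rw [Finset.sum_ite_eq' (Finset.range (e+1)) n (fun _ => (if e = n then t else 0))]
    by_cases he : e = n
    · simp [he]
    · simp [he]
  have hmain : ∑ i ∈ Finset.range (e+1),
      (n.choose i * t ^ ((e+1) - i) * inA n (e+1) i + (if i = n then (if e = n then t else 0) else 0))
      = ∑ i ∈ Finset.range (e+1),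
        (n.choose i * t ^ ((e+1) - i) * inB n (e+1) i + t * (n.choose i * t ^ (e - i) * inG n e i)) := by
    apply Finset.sum_congr rfl
    intro i hi
    simp only [Finset.mem_range] at hi
    rcases lt_trichotomy i n with hlt | heq | hgt
    · rw [claimA n e i (by omega) hlt]
      rw [if_neg (by omega : ¬ i = n)]
      have hp : (e+1) - i = (e - i) + 1 := by omega
      rw [hp, pow_succ]
      ring
    · subst heq
      rw [inA_at_n, inB_at_n, inG_at_n i e (by omega), if_pos rfl, Nat.choose_self]
      by_cases he : e = i
      · rw [if_pos he]
        rw [show e + 1 - i = 1 by omega, show e - i = 0 by omega, pow_zero, pow_one]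
        rw [if_pos he]
        ring
      · rw [if_neg he, if_neg he]
        ring
    · rw [Nat.choose_eq_zero_of_lt hgt]
      rw [if_neg (by omega : ¬ i = n)]
      ring
  rw [Finset.sum_add_distrib, Finset.sum_add_distrib] at hmain
  omega

/-- The master identity. -/
theorem identity (t n e : ℕ) :
    g t (n+1) (e+1) + (if e = n then t else 0)
      = (t+1) * g t n e + ∑ l ∈ Finset.range (e+2), t^l * g t n ((e+1)-l) := by
  have h1 := I1 t n e
  have h2 := I2 t n e
  have h3 := I3 t n (e+1)
  have h4 : ∑ l ∈ Finset.range (e+1+1), t^l * g t n ((e+1)-l)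
      = ∑ l ∈ Finset.range (e+2), t^l * g t n ((e+1)-l) := rfl
  have h5 : (t+1) * g t n e = t * g t n e + g t n e := by ring
  omega

end CNA

namespace CN

variable {α : Type*} [DecidableEq α] [Fintype α]

def blkF (x : α) : ℕ → Finset (List α)
  | 0 => {([] : List α)}
  | l+1 => ((Finset.univ.filter (fun c => c ≠ x)) ×ˢ blkF x l).image (fun p => p.1 :: p.2)

theorem card_nx (x : α) : (Finset.univ.filter (fun c => c ≠ x)).card = Fintype.card α - 1 := by
  rw [Finset.filter_ne', Finset.card_erase_of_mem (Finset.mem_univ x), Finset.card_univ]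

theorem card_blkF (x : α) (l : ℕ) : (blkF x l).card ≤ (Fintype.card α - 1) ^ l := by
  induction l with
  | zero => simp [blkF]
  | succ l ih =>
    calc (blkF x (l+1)).card ≤ ((Finset.univ.filter (fun c => c ≠ x)) ×ˢ blkF x l).card :=
          Finset.card_image_le
    _ = (Finset.univ.filter (fun c => c ≠ x)).card * (blkF x l).card := Finset.card_product _ _
    _ ≤ (Fintype.card α - 1) * (Fintype.card α - 1) ^ l := by
        rw [card_nx]
        exact Nat.mul_le_mul_left _ ih
    _ = (Fintype.card α - 1) ^ (l+1) := by rw [pow_succ]; ring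

theorem mem_blkF {x : α} {blk : List α} (h : ∀ c ∈ blk, c ≠ x) : blk ∈ blkF x blk.length := by
  induction blk with
  | nil => simp [blkF]
  | cons c bl ih =>
    show c :: bl ∈ blkF x (bl.length + 1)
    rw [blkF]
    apply Finset.mem_image.mpr
    refine ⟨(c, bl), ?_, rfl⟩
    rw [Finset.mem_product]
    exact ⟨Finset.mem_filter.mpr ⟨Finset.mem_univ c, h c (by simp)⟩,
      ih (fun a ha => h a (by simp [ha]))⟩

def cF : List α → ℕ → Finset (List (Tg α))
  | [], d => if d = 0 then {([] : List (Tg α))} else ∅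
  | x :: W, d =>
      (if 1 ≤ d then
        (cF W (d-1)).image (fun T => Tg.del :: T) ∪
        ((cF W (d-1)).filter (fun T => ¬ allDel T)).biUnion
          (fun T => (Finset.univ.filter (fun c => c ≠ x)).image (fun c => Tg.sub c :: T))
      else ∅) ∪
      (Finset.range (d+1)).biUnion (fun l =>
        ((blkF x l) ×ˢ (cF W (d - l))).image (fun p => Tg.keep p.1 :: p.2))

theorem mem_cF {W : List α} {T : List (Tg α)} (hOk : Ok W T) :
    EndOk T → T ∈ cF W (costT T) := by
  induction hOk with
  | nil => intro _; simp [cF, costT]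
  | @del x W T hT ih =>
    intro hE
    have hT' := ih hE
    show Tg.del :: T ∈ cF (x :: W) (costT (Tg.del :: T))
    rw [cF]
    apply Finset.mem_union_left
    rw [if_pos (by simp [costT])]
    apply Finset.mem_union_left
    apply Finset.mem_image.mpr
    refine ⟨T, ?_, rfl⟩
    have h1 : costT (Tg.del :: T) - 1 = costT T := by simp [costT]
    rw [h1]
    exact hT'
  | @sub x c W T hc hT ih =>
    intro hE
    obtain ⟨hET, hnd⟩ := hE
    have hT' := ih hET
    show Tg.sub c :: T ∈ cF (x :: W) (costT (Tg.sub c :: T))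
    rw [cF]
    apply Finset.mem_union_left
    rw [if_pos (by simp [costT])]
    apply Finset.mem_union_right
    apply Finset.mem_biUnion.mpr
    refine ⟨T, ?_, ?_⟩
    · apply Finset.mem_filter.mpr
      refine ⟨?_, hnd⟩
      have h1 : costT (Tg.sub c :: T) - 1 = costT T := by simp [costT]
      rw [h1]
      exact hT'
    · apply Finset.mem_image.mpr
      exact ⟨c, Finset.mem_filter.mpr ⟨Finset.mem_univ c, hc⟩, rfl⟩
  | @keep x blk W T hblk hT ih =>
    intro hE
    have hT' := ih hE
    show Tg.keep blk :: T ∈ cF (x :: W) (costT (Tg.keep blk :: T))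
    rw [cF]
    apply Finset.mem_union_right
    apply Finset.mem_biUnion.mpr
    refine ⟨blk.length, ?_, ?_⟩
    · apply Finset.mem_range.mpr
      simp [costT]
    · apply Finset.mem_image.mpr
      refine ⟨(blk, T), ?_, rfl⟩
      rw [Finset.mem_product]
      refine ⟨mem_blkF hblk, ?_⟩
      have h1 : costT (Tg.keep blk :: T) - blk.length = costT T := by simp [costT]
      rw [h1]
      exact hT'

theorem card_cF (W : List α) : ∀ d : ℕ,
    (cF W d).card ≤ CNA.g (Fintype.card α - 1) W.length d := by
  induction W with
  | nil =>
    intro d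
    cases d with
    | zero =>
      rw [CNA.g_zero]
      simp [cF]
    | succ e => simp [cF]
  | cons x W ih =>
    intro d
    simp only [List.length_cons]
    cases d with
    | zero =>
      rw [CNA.g_zero, cF, if_neg (by omega)]
      refine le_trans (Finset.card_union_le _ _) ?_
      rw [Finset.card_empty]
      refine le_trans (Nat.zero_add _).le ?_
      refine le_trans Finset.card_biUnion_le ?_
      rw [Finset.sum_range_one]
      refine le_trans Finset.card_image_le ?_
      rw [Finset.card_product]
      have h1 : (blkF x 0).card = 1 := by simp [blkF]
      rw [h1, one_mul]
      have h2 := ih 0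
      rw [CNA.g_zero] at h2
      simpa using h2
    | succ e =>
      have hd1 : e + 1 - 1 = e := by omega
      have c1 : ((cF W e).image (fun T => (Tg.del : Tg α) :: T)).card
          ≤ CNA.g (Fintype.card α - 1) W.length e :=
        le_trans Finset.card_image_le (ih e)
      have c2 : (((cF W e).filter (fun T => ¬ allDel T)).biUnion
          (fun T => (Finset.univ.filter (fun c => c ≠ x)).image (fun c => Tg.sub c :: T))).card
          ≤ ((cF W e).filter (fun T => ¬ allDel T)).card * (Fintype.card α - 1) := by
        refine le_trans Finset.card_biUnion_le ?_
        have h3 : ∀ T ∈ (cF W e).filter (fun T => ¬ allDel T),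
            (((Finset.univ.filter (fun c => c ≠ x)).image (fun c => Tg.sub c :: T))).card
            ≤ (Fintype.card α - 1) := by
          intro T _
          refine le_trans Finset.card_image_le ?_
          rw [card_nx]
        refine le_trans (Finset.sum_le_sum h3) ?_
        rw [Finset.sum_const, smul_eq_mul]
      have c4 : ((Finset.range (e+1+1)).biUnion (fun l =>
          ((blkF x l) ×ˢ (cF W (e+1-l))).image (fun p => Tg.keep p.1 :: p.2))).card
          ≤ ∑ l ∈ Finset.range (e+2), (Fintype.card α - 1)^l
              * CNA.g (Fintype.card α - 1) W.length (e+1-l) := by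
        refine le_trans Finset.card_biUnion_le ?_
        apply Finset.sum_le_sum
        intro l _
        refine le_trans Finset.card_image_le ?_
        rw [Finset.card_product]
        exact Nat.mul_le_mul (card_blkF x l) (ih _)
      have hid := CNA.identity (Fintype.card α - 1) W.length e
      have hexp : (Fintype.card α - 1 + 1) * CNA.g (Fintype.card α - 1) W.length e
          = CNA.g (Fintype.card α - 1) W.length e * (Fintype.card α - 1)
            + CNA.g (Fintype.card α - 1) W.length e := by ring
      have htot : (cF (x :: W) (e+1)).card
          ≤ CNA.g (Fintype.card α - 1) W.length e
            + ((cF W e).filter (fun T => ¬ allDel T)).card * (Fintype.card α - 1)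
            + ∑ l ∈ Finset.range (e+2), (Fintype.card α - 1)^l
                * CNA.g (Fintype.card α - 1) W.length (e+1-l) := by
        rw [cF, if_pos (by omega), hd1]
        refine le_trans (Finset.card_union_le _ _) ?_
        have := Finset.card_union_le ((cF W e).image (fun T => (Tg.del : Tg α) :: T))
          (((cF W e).filter (fun T => ¬ allDel T)).biUnion
            (fun T => (Finset.univ.filter (fun c => c ≠ x)).image (fun c => Tg.sub c :: T)))
        omega
      by_cases hen : e = W.length
      · rw [if_pos hen] at hid
        have hmem : (W.map (fun _ => (Tg.del : Tg α))) ∈ cF W e := by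
          have h0 := mem_cF (ok_allDelList W) (endOk_allDelList W)
          rw [costT_allDelList] at h0
          rw [hen]
          exact h0
        have hfil : ((cF W e).filter (fun T => ¬ allDel T)).card + 1 ≤ (cF W e).card := by
          have hss : (cF W e).filter (fun T => ¬ allDel T) ⊂ cF W e := by
            rw [Finset.ssubset_iff_of_subset (Finset.filter_subset _ _)]
            exact ⟨_, hmem, fun hmemf => (Finset.mem_filter.mp hmemf).2 (allDel_allDelList W)⟩
          exact Finset.card_lt_card hss
        have hfil2 : ((cF W e).filter (fun T => ¬ allDel T)).card * (Fintype.card α - 1)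
            + (Fintype.card α - 1)
            ≤ CNA.g (Fintype.card α - 1) W.length e * (Fintype.card α - 1) := by
          have h5 := Nat.mul_le_mul_right (Fintype.card α - 1) (le_trans hfil (ih e))
          calc ((cF W e).filter (fun T => ¬ allDel T)).card * (Fintype.card α - 1)
              + (Fintype.card α - 1)
              = (((cF W e).filter (fun T => ¬ allDel T)).card + 1) * (Fintype.card α - 1) := by
                ring
          _ ≤ _ := h5
        omega
      · rw [if_neg hen] at hid
        have hfil2 : ((cF W e).filter (fun T => ¬ allDel T)).card * (Fintype.card α - 1)
            ≤ CNA.g (Fintype.card α - 1) W.length e * (Fintype.card α - 1) :=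
          Nat.mul_le_mul_right _ (le_trans (Finset.card_filter_le _ _) (ih e))
        omega

theorem cover {W : List α} {d : ℕ} (hdw : d < W.length) :
    {U : List α | lev U W ≤ d ∧ ∀ P : List α, P <+: U → P ≠ U → ¬ lev P W ≤ d}
      ⊆ ↑((cF W d).image (applyT W)) := by
  rintro U ⟨hlev, hpre⟩
  rcases main (U.length + W.length) W U le_rfl with ⟨P, hp, hne, hl⟩ | ⟨T, hOk, hE, happ, hcost⟩
  · exact absurd (le_trans hl hlev) (hpre P hp hne)
  · have hUne : U ≠ [] := by
      rintro rfl
      rw [lev_nil_left] at hlev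
      omega
    have hexact : lev U W = d := by
      by_contra hne'
      have hlt : lev U W < d := lt_of_le_of_ne hlev hne'
      have h6 := lev_dropLast_le W U hUne
      refine hpre U.dropLast (List.dropLast_prefix U) ?_ (by omega)
      intro hEq
      have := congrArg List.length hEq
      rw [List.length_dropLast] at this
      cases U with
      | nil => exact hUne rfl
      | cons a U' => simp at this
    have hT : T ∈ cF W d := by
      have := mem_cF hOk hE
      rw [hcost, hexact] at this
      exact this
    exact Finset.mem_coe.mpr (Finset.mem_image.mpr ⟨T, hT, happ⟩)

end CN

theorem stmt_15 {α : Type*} [Fintype α] [DecidableEq α] (s : ℕ)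
    (hcard : Fintype.card α = s) (hs : 2 ≤ s)
    (W : List α) (w d : ℕ) (hw : W.length = w) (hdw : d < w) :
    {U : List α | levenshtein Levenshtein.defaultCost U W ≤ d ∧
        ∀ P : List α, P <+: U → P ≠ U →
          ¬ levenshtein Levenshtein.defaultCost P W ≤ d}.ncard
      ≤ ∑ i ∈ Finset.range (d + 1), Nat.choose w i * (s - 1) ^ (d - i) *
          ∑ j ∈ Finset.range (d - i + 1),
            Nat.choose (w - i - 1) j * Nat.choose (w + d - 2 * i - 2 * j - 1) (d - i - j) := by
  subst hw
  subst hcard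
  have h1 := CN.cover (W := W) (d := d) hdw
  have h2 : {U : List α | CN.lev U W ≤ d ∧
      ∀ P : List α, P <+: U → P ≠ U → ¬ CN.lev P W ≤ d}.ncard
      ≤ ((CN.cF W d).image (CN.applyT W)).card := by
    rw [← Set.ncard_coe_finset]
    exact Set.ncard_le_ncard h1 (Finset.finite_toSet _)
  refine le_trans h2 ?_
  refine le_trans Finset.card_image_le ?_
  refine le_trans (CN.card_cF W d) ?_
  apply le_of_eq
  rw [CNA.g]
  apply Finset.sum_congr rfl
  intro i _
  rw [CNA.inG]
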